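/- Let σ_cc(p) = ρ_{A₁B₁}(p) ⊗ ρ_{A₂C₁}(p) ⊗ ρ_{B₂C₂}(p) be the 3-partite pair-entangled-network state on the triangle (completely connected) graph, where each of the three parties A, B, C holds two qubits and each pair of parties shares a 2-dimensional isotropic state of visibility p. If p > (2√5 − 3)/3, then σ_cc(p) is genuinely multipartite entangled (i.e., not biseparable) with respect to the tripartition A|B|C. -/

import Mathlib

open scoped BigOperators

noncomputable section

/-- Projector onto the `d`-dimensional maximally entangled state
`|φ⁺_d⟩ = (1/√d) ∑ᵢ |ii⟩`, as a matrix on `ℂ^d ⊗ ℂ^d`. -/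
def phiPlus (d : ℕ) : Matrix (Fin d × Fin d) (Fin d × Fin d) ℂ :=
  fun x y => if x.1 = x.2 ∧ y.1 = y.2 then (1 / (d : ℂ)) else 0

/-- The `d`-dimensional isotropic state with visibility `p`:
`ρ(p) = p φ⁺_d + (1-p) 𝟙/d²`. -/
def iso (d : ℕ) (p : ℝ) : Matrix (Fin d × Fin d) (Fin d × Fin d) ℂ :=
  (p : ℂ) • phiPlus d +
    (((1 - p) / (d : ℝ) ^ 2 : ℝ) : ℂ) • (1 : Matrix (Fin d × Fin d) (Fin d × Fin d) ℂ)

/-- The (possibly unnormalized) projector `|ψ⟩⟨ψ|` onto a vector `ψ`. -/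
def vecProj {ι : Type} (ψ : ι → ℂ) : Matrix ι ι ℂ :=
  fun i j => ψ i * (starRingEnd ℂ) (ψ j)

/-- A pure tripartite vector factors across the bipartition `A|BC`. -/
def factorsA {α β γ : Type} (ψ : α × β × γ → ℂ) : Prop :=
  ∃ (f : α → ℂ) (g : β × γ → ℂ), ∀ a b c, ψ (a, b, c) = f a * g (b, c)

/-- A pure tripartite vector factors across the bipartition `B|AC`. -/
def factorsB {α β γ : Type} (ψ : α × β × γ → ℂ) : Prop :=
  ∃ (f : β → ℂ) (g : α × γ → ℂ), ∀ a b c, ψ (a, b, c) = f b * g (a, c)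

/-- A pure tripartite vector factors across the bipartition `C|AB`. -/
def factorsC {α β γ : Type} (ψ : α × β × γ → ℂ) : Prop :=
  ∃ (f : γ → ℂ) (g : α × β → ℂ), ∀ a b c, ψ (a, b, c) = f c * g (a, b)

/-- A tripartite density matrix (parties `A`, `B`, `C`) is biseparable if it is a finite
convex combination of projectors onto normalized pure states, each of which factors
across one of the three bipartitions `A|BC`, `B|AC`, `C|AB`. -/
def Bisep3 {α β γ : Type} [Fintype α] [Fintype β] [Fintype γ]
    (ρ : Matrix (α × β × γ) (α × β × γ) ℂ) : Prop :=
  ∃ (k : ℕ) (w : Fin k → ℝ) (ψ : Fin k → α × β × γ → ℂ),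
    (∀ t, 0 ≤ w t) ∧ (∑ t, w t = 1) ∧
    (∀ t, factorsA (ψ t) ∨ factorsB (ψ t) ∨ factorsC (ψ t)) ∧
    (∀ t, ∑ x, Complex.normSq (ψ t x) = 1) ∧
    ρ = ∑ t, (w t : ℂ) • vecProj (ψ t)

/-- The 3-partite triangle PEN state
`σ_cc(p) = ρ_{A₁B₁}(p) ⊗ ρ_{A₂C₁}(p) ⊗ ρ_{B₂C₂}(p)`.
Party `A` holds `(a₁, a₂)`, party `B` holds `(b₁, b₂)`, party `C` holds `(c₁, c₂)`;
the global index is `((a₁, a₂), (b₁, b₂), (c₁, c₂))`. -/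
def sigmaCC (d : ℕ) (p : ℝ) :
    Matrix ((Fin d × Fin d) × (Fin d × Fin d) × Fin d × Fin d)
           ((Fin d × Fin d) × (Fin d × Fin d) × Fin d × Fin d) ℂ :=
  fun x y =>
    iso d p (x.1.1, x.2.1.1) (y.1.1, y.2.1.1) *
      (iso d p (x.1.2, x.2.2.1) (y.1.2, y.2.2.1) *
        iso d p (x.2.1.2, x.2.2.2) (y.2.1.2, y.2.2.2))


namespace PENaux

open Complex

abbrev PENI := (Fin 2 × Fin 2) × (Fin 2 × Fin 2) × Fin 2 × Fin 2

/-! ### Core inequality -/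

def hhF (g : Fin 2 → Fin 2 → Fin 2 → Fin 2 → ℂ) (r1 r2 : Fin 2) : ℂ := ∑ z, g r1 r2 z z
def g0F (g : Fin 2 → Fin 2 → Fin 2 → Fin 2 → ℂ) (r1 r2 s1 s2 : Fin 2) : ℂ :=
  g r1 r2 s1 s2 - if s1 = s2 then hhF g r1 r2 / 2 else 0
def u0F (f : Fin 2 × Fin 2 → ℂ) (g : Fin 2 → Fin 2 → Fin 2 → Fin 2 → ℂ) (x2 r2 s1 s2 : Fin 2) : ℂ :=
  ∑ x, f (x,x2) * g0F g x r2 s1 s2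
def v0F (f : Fin 2 × Fin 2 → ℂ) (g : Fin 2 → Fin 2 → Fin 2 → Fin 2 → ℂ) (x1 r1 s1 s2 : Fin 2) : ℂ :=
  ∑ y, f (x1,y) * g0F g r1 y s1 s2
def w0F (f : Fin 2 × Fin 2 → ℂ) (g : Fin 2 → Fin 2 → Fin 2 → Fin 2 → ℂ) (s1 s2 : Fin 2) : ℂ :=
  ∑ x, ∑ y, f (x,y) * g0F g x y s1 s2
def w13F (f : Fin 2 × Fin 2 → ℂ) (g : Fin 2 → Fin 2 → Fin 2 → Fin 2 → ℂ) (x2 r2 : Fin 2) : ℂ :=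
  ∑ x, f (x,x2) * hhF g x r2
def w23F (f : Fin 2 × Fin 2 → ℂ) (g : Fin 2 → Fin 2 → Fin 2 → Fin 2 → ℂ) (x1 r1 : Fin 2) : ℂ :=
  ∑ y, f (x1,y) * hhF g r1 y
def TF (f : Fin 2 × Fin 2 → ℂ) (g : Fin 2 → Fin 2 → Fin 2 → Fin 2 → ℂ) : ℂ :=
  ∑ x, ∑ y, f (x,y) * hhF g x y

section CoreSection
variable (f : Fin 2 × Fin 2 → ℂ) (g : Fin 2 → Fin 2 → Fin 2 → Fin 2 → ℂ)

lemma key0 (r1 r2 : Fin 2) : g0F g r1 r2 0 0 + g0F g r1 r2 1 1 = 0 := by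
  simp [g0F, hhF, Fin.sum_univ_two]; ring
lemma keyu (x2 r2 : Fin 2) : u0F f g x2 r2 0 0 + u0F f g x2 r2 1 1 = 0 := by
  simp only [u0F, Fin.sum_univ_two]
  linear_combination f (0,x2) * key0 g 0 r2 + f (1,x2) * key0 g 1 r2
lemma keyv (x1 r1 : Fin 2) : v0F f g x1 r1 0 0 + v0F f g x1 r1 1 1 = 0 := by
  simp only [v0F, Fin.sum_univ_two]
  linear_combination f (x1,0) * key0 g r1 0 + f (x1,1) * key0 g r1 1
lemma keyw : w0F f g 0 0 + w0F f g 1 1 = 0 := by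
  simp only [w0F, Fin.sum_univ_two]
  linear_combination f (0,0) * key0 g 0 0 + f (0,1) * key0 g 0 1
    + f (1,0) * key0 g 1 0 + f (1,1) * key0 g 1 1

lemma para (a b c : ℂ) (hb : b = -a) :
    normSq (a + c) + normSq (b + c) = 2 * normSq a + 2 * normSq c := by
  subst hb
  simp only [Complex.normSq_apply, Complex.add_re, Complex.add_im, Complex.neg_re, Complex.neg_im]
  ring
lemma nsq_half (z : ℂ) : normSq (z / 2) = normSq z / 4 := by
  rw [map_div₀]; norm_num [Complex.normSq_apply]
lemma nsq2 (a b : ℂ) : normSq (a + b) ≤ 2 * (normSq a + normSq b) := by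
  simp only [Complex.normSq_apply, Complex.add_re, Complex.add_im]
  nlinarith [sq_nonneg (a.re - b.re), sq_nonneg (a.im - b.im)]

lemma splitU1 (x2 r2 s1 s2 : Fin 2) :
    (∑ x, f (x,x2) * g x r2 s1 s2)
      = u0F f g x2 r2 s1 s2 + (if s1 = s2 then w13F f g x2 r2 / 2 else 0) := by
  simp only [u0F, g0F, w13F, hhF, Fin.sum_univ_two]
  split_ifs <;> ring
lemma splitU2 (x1 r1 s1 s2 : Fin 2) :
    (∑ y, f (x1,y) * g r1 y s1 s2)
      = v0F f g x1 r1 s1 s2 + (if s1 = s2 then w23F f g x1 r1 / 2 else 0) := by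
  simp only [v0F, g0F, w23F, hhF, Fin.sum_univ_two]
  split_ifs <;> ring
lemma splitW12 (s1 s2 : Fin 2) :
    (∑ x, ∑ y, f (x,y) * g x y s1 s2)
      = w0F f g s1 s2 + (if s1 = s2 then TF f g / 2 else 0) := by
  simp only [w0F, g0F, TF, hhF, Fin.sum_univ_two]
  split_ifs <;> ring

lemma ptU1 (x2 r2 : Fin 2) :
    (∑ s1, ∑ s2, normSq (∑ x, f (x,x2) * g x r2 s1 s2))
      = (∑ s1, ∑ s2, normSq (u0F f g x2 r2 s1 s2)) + (1/2) * normSq (w13F f g x2 r2) := by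
  have hu : u0F f g x2 r2 1 1 = - u0F f g x2 r2 0 0 := by linear_combination keyu f g x2 r2
  simp only [splitU1 f g]
  simp only [Fin.sum_univ_two]
  norm_num
  have hp := para (u0F f g x2 r2 0 0) (u0F f g x2 r2 1 1) (w13F f g x2 r2 / 2) hu
  have hn : normSq (u0F f g x2 r2 1 1) = normSq (u0F f g x2 r2 0 0) := by
    rw [hu, Complex.normSq_neg]
  have h4 := nsq_half (w13F f g x2 r2)
  linarith
lemma ptU2 (x1 r1 : Fin 2) :
    (∑ s1, ∑ s2, normSq (∑ y, f (x1,y) * g r1 y s1 s2))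
      = (∑ s1, ∑ s2, normSq (v0F f g x1 r1 s1 s2)) + (1/2) * normSq (w23F f g x1 r1) := by
  have hu : v0F f g x1 r1 1 1 = - v0F f g x1 r1 0 0 := by linear_combination keyv f g x1 r1
  simp only [splitU2 f g]
  simp only [Fin.sum_univ_two]
  norm_num
  have hp := para (v0F f g x1 r1 0 0) (v0F f g x1 r1 1 1) (w23F f g x1 r1 / 2) hu
  have hn : normSq (v0F f g x1 r1 1 1) = normSq (v0F f g x1 r1 0 0) := by
    rw [hu, Complex.normSq_neg]
  have h4 := nsq_half (w23F f g x1 r1)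
  linarith
lemma ptW12 :
    (∑ s1, ∑ s2, normSq (∑ x, ∑ y, f (x,y) * g x y s1 s2))
      = (∑ s1, ∑ s2, normSq (w0F f g s1 s2)) + (1/2) * normSq (TF f g) := by
  have hu : w0F f g 1 1 = - w0F f g 0 0 := by linear_combination keyw f g
  simp only [splitW12 f g]
  simp only [Fin.sum_univ_two]
  norm_num
  have hp := para (w0F f g 0 0) (w0F f g 1 1) (TF f g / 2) hu
  have hn : normSq (w0F f g 1 1) = normSq (w0F f g 0 0) := by
    rw [hu, Complex.normSq_neg]
  have h4 := nsq_half (TF f g)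
  linarith

lemma wrel (s1 s2 : Fin 2) : w0F f g s1 s2 = u0F f g 0 0 s1 s2 + u0F f g 1 1 s1 s2 := by
  simp only [w0F, u0F, Fin.sum_univ_two]; ring

lemma J1 : (∑ s1, ∑ s2, normSq (w0F f g s1 s2))
    ≤ 2 * (∑ x2, ∑ r2, ∑ s1, ∑ s2, normSq (u0F f g x2 r2 s1 s2)) := by
  simp only [Fin.sum_univ_two, wrel f g]
  have h1 := nsq2 (u0F f g 0 0 0 0) (u0F f g 1 1 0 0)
  have h2 := nsq2 (u0F f g 0 0 0 1) (u0F f g 1 1 0 1)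
  have h3 := nsq2 (u0F f g 0 0 1 0) (u0F f g 1 1 1 0)
  have h4 := nsq2 (u0F f g 0 0 1 1) (u0F f g 1 1 1 1)
  have n1 := Complex.normSq_nonneg (u0F f g 0 1 0 0)
  have n2 := Complex.normSq_nonneg (u0F f g 0 1 0 1)
  have n3 := Complex.normSq_nonneg (u0F f g 0 1 1 0)
  have n4 := Complex.normSq_nonneg (u0F f g 0 1 1 1)
  have n5 := Complex.normSq_nonneg (u0F f g 1 0 0 0)
  have n6 := Complex.normSq_nonneg (u0F f g 1 0 0 1)
  have n7 := Complex.normSq_nonneg (u0F f g 1 0 1 0)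
  have n8 := Complex.normSq_nonneg (u0F f g 1 0 1 1)
  linarith

lemma J2 : normSq (TF f g)
    ≤ (∑ x1, ∑ x2, normSq (f (x1,x2))) * (∑ r1, ∑ r2, normSq (hhF g r1 r2)) := by
  have habs : ‖TF f g‖ ≤
      ‖f (0,0)‖ * ‖hhF g 0 0‖
      + ‖f (0,1)‖ * ‖hhF g 0 1‖
      + ‖f (1,0)‖ * ‖hhF g 1 0‖
      + ‖f (1,1)‖ * ‖hhF g 1 1‖ := by
    simp only [TF, Fin.sum_univ_two]
    calc ‖f (0,0) * hhF g 0 0 + f (0,1) * hhF g 0 1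
          + (f (1,0) * hhF g 1 0 + f (1,1) * hhF g 1 1)‖
        ≤ ‖f (0,0) * hhF g 0 0 + f (0,1) * hhF g 0 1‖
          + ‖f (1,0) * hhF g 1 0 + f (1,1) * hhF g 1 1‖ := norm_add_le _ _
      _ ≤ ‖f (0,0) * hhF g 0 0‖ + ‖f (0,1) * hhF g 0 1‖
          + (‖f (1,0) * hhF g 1 0‖ + ‖f (1,1) * hhF g 1 1‖) := by
          have h1 := norm_add_le (f (0,0) * hhF g 0 0) (f (0,1) * hhF g 0 1)
          have h2 := norm_add_le (f (1,0) * hhF g 1 0) (f (1,1) * hhF g 1 1)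
          linarith
      _ = _ := by simp only [norm_mul]; ring
  have hcs := Finset.sum_mul_sq_le_sq_mul_sq Finset.univ
    (![‖f (0,0)‖, ‖f (0,1)‖, ‖f (1,0)‖, ‖f (1,1)‖])
    (![‖hhF g 0 0‖, ‖hhF g 0 1‖, ‖hhF g 1 0‖, ‖hhF g 1 1‖])
  simp only [Fin.sum_univ_four, Matrix.cons_val_zero, Matrix.cons_val_one, Matrix.head_cons,
    Matrix.cons_val_two, Matrix.tail_cons, Matrix.cons_val_three] at hcs
  have hsq : normSq (TF f g) = (‖TF f g‖)^2 := (Complex.sq_norm _).symm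
  have h0 : (0:ℝ) ≤ ‖TF f g‖ := norm_nonneg _
  have hrhs : ∀ z : ℂ, (‖z‖)^2 = normSq z := Complex.sq_norm
  simp only [Fin.sum_univ_two]
  calc normSq (TF f g) = (‖TF f g‖)^2 := hsq
    _ ≤ (‖f (0,0)‖ * ‖hhF g 0 0‖
        + ‖f (0,1)‖ * ‖hhF g 0 1‖
        + ‖f (1,0)‖ * ‖hhF g 1 0‖
        + ‖f (1,1)‖ * ‖hhF g 1 1‖)^2 := by
        apply pow_le_pow_left₀ h0 habs _
    _ ≤ ((‖f (0,0)‖)^2 + (‖f (0,1)‖)^2 + (‖f (1,0)‖)^2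
        + (‖f (1,1)‖)^2)
        * ((‖hhF g 0 0‖)^2 + (‖hhF g 0 1‖)^2 + (‖hhF g 1 0‖)^2
        + (‖hhF g 1 1‖)^2) := by
        nlinarith [hcs]
    _ = _ := by simp only [hrhs]; ring

end CoreSection

def CoreRHS (f : Fin 2 × Fin 2 → ℂ) (g : Fin 2 → Fin 2 → Fin 2 → Fin 2 → ℂ) : ℝ :=
  (1/2) * (∑ x2, ∑ r2, ∑ s1, ∑ s2, normSq (∑ x, f (x,x2) * g x r2 s1 s2))
      + (1/2) * (∑ x1, ∑ r1, ∑ s1, ∑ s2, normSq (∑ y, f (x1,y) * g r1 y s1 s2))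
      + (1/2) * ((∑ x1, ∑ x2, normSq (f (x1,x2))) * (∑ r1, ∑ r2, normSq (∑ z, g r1 r2 z z)))
      - (1/4) * (∑ s1, ∑ s2, normSq (∑ x, ∑ y, f (x,y) * g x y s1 s2))
      - (1/4) * (∑ x2, ∑ r2, normSq (∑ x, f (x,x2) * (∑ z, g x r2 z z)))
      - (1/4) * (∑ x1, ∑ r1, normSq (∑ y, f (x1,y) * (∑ z, g r1 y z z)))
      - (3/8) * normSq (∑ x, ∑ y, f (x,y) * (∑ z, g x y z z))

lemma coreIneq (f : Fin 2 × Fin 2 → ℂ) (g : Fin 2 → Fin 2 → Fin 2 → Fin 2 → ℂ) :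
    0 ≤ CoreRHS f g := by
  rw [CoreRHS]
  have e1 : (∑ x2, ∑ r2, ∑ s1, ∑ s2, normSq (∑ x, f (x,x2) * g x r2 s1 s2))
      = (∑ x2, ∑ r2, ∑ s1, ∑ s2, normSq (u0F f g x2 r2 s1 s2))
        + (1/2) * (∑ x2, ∑ r2, normSq (w13F f g x2 r2)) := by
    calc (∑ x2, ∑ r2, ∑ s1, ∑ s2, normSq (∑ x, f (x,x2) * g x r2 s1 s2))
        = ∑ x2, ∑ r2, ((∑ s1, ∑ s2, normSq (u0F f g x2 r2 s1 s2))
            + (1/2) * normSq (w13F f g x2 r2)) :=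
          Finset.sum_congr rfl fun x2 _ => Finset.sum_congr rfl fun r2 _ => ptU1 f g x2 r2
      _ = _ := by simp only [Fin.sum_univ_two]; ring
  have e2 : (∑ x1, ∑ r1, ∑ s1, ∑ s2, normSq (∑ y, f (x1,y) * g r1 y s1 s2))
      = (∑ x1, ∑ r1, ∑ s1, ∑ s2, normSq (v0F f g x1 r1 s1 s2))
        + (1/2) * (∑ x1, ∑ r1, normSq (w23F f g x1 r1)) := by
    calc (∑ x1, ∑ r1, ∑ s1, ∑ s2, normSq (∑ y, f (x1,y) * g r1 y s1 s2))
        = ∑ x1, ∑ r1, ((∑ s1, ∑ s2, normSq (v0F f g x1 r1 s1 s2))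
            + (1/2) * normSq (w23F f g x1 r1)) :=
          Finset.sum_congr rfl fun x1 _ => Finset.sum_congr rfl fun r1 _ => ptU2 f g x1 r1
      _ = _ := by simp only [Fin.sum_univ_two]; ring
  have e3 := ptW12 f g
  have j1 := J1 f g
  have j2 := J2 f g
  have hW13 : (∑ x2, ∑ r2, normSq (∑ x, f (x,x2) * (∑ z, g x r2 z z)))
      = ∑ x2, ∑ r2, normSq (w13F f g x2 r2) := rfl
  have hW23 : (∑ x1, ∑ r1, normSq (∑ y, f (x1,y) * (∑ z, g r1 y z z)))
      = ∑ x1, ∑ r1, normSq (w23F f g x1 r1) := rfl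
  have hT : normSq (∑ x, ∑ y, f (x,y) * (∑ z, g x y z z)) = normSq (TF f g) := rfl
  have hH : (∑ r1, ∑ r2, normSq (∑ z, g r1 r2 z z)) = ∑ r1, ∑ r2, normSq (hhF g r1 r2) := rfl
  have nv : 0 ≤ ∑ x1, ∑ r1, ∑ s1, ∑ s2, normSq (v0F f g x1 r1 s1 s2) := by
    apply Finset.sum_nonneg; intro _ _
    apply Finset.sum_nonneg; intro _ _
    apply Finset.sum_nonneg; intro _ _
    apply Finset.sum_nonneg; intro _ _
    exact Complex.normSq_nonneg _
  rw [e1, e2, e3, hW13, hW23, hT, hH]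
  linarith

/-! ### Amplitude functionals on pure vectors -/

def A1 (ψ : PENI → ℂ) : ℝ :=
  ∑ a2, ∑ b2, ∑ c1, ∑ c2, normSq (∑ x, ψ ((x,a2),(x,b2),(c1,c2)))
def A2 (ψ : PENI → ℂ) : ℝ :=
  ∑ a1, ∑ b1, ∑ b2, ∑ c2, normSq (∑ y, ψ ((a1,y),(b1,b2),(y,c2)))
def A3 (ψ : PENI → ℂ) : ℝ :=
  ∑ a1, ∑ a2, ∑ b1, ∑ c1, normSq (∑ z, ψ ((a1,a2),(b1,z),(c1,z)))
def A12 (ψ : PENI → ℂ) : ℝ :=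
  ∑ b2, ∑ c2, normSq (∑ x, ∑ y, ψ ((x,y),(x,b2),(y,c2)))
def A13 (ψ : PENI → ℂ) : ℝ :=
  ∑ a2, ∑ c1, normSq (∑ x, ∑ z, ψ ((x,a2),(x,z),(c1,z)))
def A23 (ψ : PENI → ℂ) : ℝ :=
  ∑ a1, ∑ b1, normSq (∑ y, ∑ z, ψ ((a1,y),(b1,z),(y,z)))
def A123 (ψ : PENI → ℂ) : ℝ :=
  normSq (∑ x, ∑ y, ∑ z, ψ ((x,y),(x,z),(y,z)))

def Qf (ψ : PENI → ℂ) : ℝ :=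
  (1/2) * A1 ψ + (1/2) * A2 ψ + (1/2) * A3 ψ
    - (1/4) * A12 ψ - (1/4) * A13 ψ - (1/4) * A23 ψ - (3/8) * A123 ψ

set_option maxHeartbeats 1000000 in
lemma cutA (ψ : PENI → ℂ) (f : Fin 2 × Fin 2 → ℂ) (g : (Fin 2 × Fin 2) × (Fin 2 × Fin 2) → ℂ)
    (hfg : ∀ a b c, ψ (a, b, c) = f a * g (b, c)) : 0 ≤ Qf ψ := by
  have hc := coreIneq f (fun r1 r2 s1 s2 => g ((r1,s1),(r2,s2)))
  have he : Qf ψ = CoreRHS f (fun r1 r2 s1 s2 => g ((r1,s1),(r2,s2))) := by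
    simp only [Qf, A1, A2, A3, A12, A13, A23, A123, CoreRHS, hfg]
    simp only [← Finset.mul_sum]
    simp only [Complex.normSq_mul]
    simp only [Fin.sum_univ_two]
    ring_nf
  rw [he]; exact hc

set_option maxHeartbeats 1000000 in
lemma cutB (ψ : PENI → ℂ) (f : Fin 2 × Fin 2 → ℂ) (g : (Fin 2 × Fin 2) × (Fin 2 × Fin 2) → ℂ)
    (hfg : ∀ a b c, ψ (a, b, c) = f b * g (a, c)) : 0 ≤ Qf ψ := by
  have hc := coreIneq f (fun r1 r2 s1 s2 => g ((r1,s1),(s2,r2)))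
  have he : Qf ψ = CoreRHS f (fun r1 r2 s1 s2 => g ((r1,s1),(s2,r2))) := by
    simp only [Qf, A1, A2, A3, A12, A13, A23, A123, CoreRHS, hfg]
    simp only [← Finset.mul_sum]
    simp only [Complex.normSq_mul]
    simp only [Fin.sum_univ_two]
    ring_nf
  rw [he]; exact hc

set_option maxHeartbeats 1000000 in
lemma cutC (ψ : PENI → ℂ) (f : Fin 2 × Fin 2 → ℂ) (g : (Fin 2 × Fin 2) × (Fin 2 × Fin 2) → ℂ)
    (hfg : ∀ a b c, ψ (a, b, c) = f c * g (a, b)) : 0 ≤ Qf ψ := by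
  have hc := coreIneq f (fun r1 r2 s1 s2 => g ((s1,r1),(s2,r2)))
  have he : Qf ψ = CoreRHS f (fun r1 r2 s1 s2 => g ((s1,r1),(s2,r2))) := by
    simp only [Qf, A1, A2, A3, A12, A13, A23, A123, CoreRHS, hfg]
    simp only [← Finset.mul_sum]
    simp only [Complex.normSq_mul]
    simp only [Fin.sum_univ_two]
    ring_nf
  rw [he]; exact hc

/-! ### Matrix functionals -/

def E1M (M : Matrix PENI PENI ℂ) : ℂ :=
  ∑ a2, ∑ b2, ∑ c1, ∑ c2, ∑ x, ∑ x',
    M ((x,a2),(x,b2),(c1,c2)) ((x',a2),(x',b2),(c1,c2))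
def E2M (M : Matrix PENI PENI ℂ) : ℂ :=
  ∑ a1, ∑ b1, ∑ b2, ∑ c2, ∑ y, ∑ y',
    M ((a1,y),(b1,b2),(y,c2)) ((a1,y'),(b1,b2),(y',c2))
def E3M (M : Matrix PENI PENI ℂ) : ℂ :=
  ∑ a1, ∑ a2, ∑ b1, ∑ c1, ∑ z, ∑ z',
    M ((a1,a2),(b1,z),(c1,z)) ((a1,a2),(b1,z'),(c1,z'))
def E12M (M : Matrix PENI PENI ℂ) : ℂ :=
  ∑ b2, ∑ c2, ∑ x, ∑ y, ∑ x', ∑ y',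
    M ((x,y),(x,b2),(y,c2)) ((x',y'),(x',b2),(y',c2))
def E13M (M : Matrix PENI PENI ℂ) : ℂ :=
  ∑ a2, ∑ c1, ∑ x, ∑ z, ∑ x', ∑ z',
    M ((x,a2),(x,z),(c1,z)) ((x',a2),(x',z'),(c1,z'))
def E23M (M : Matrix PENI PENI ℂ) : ℂ :=
  ∑ a1, ∑ b1, ∑ y, ∑ z, ∑ y', ∑ z',
    M ((a1,y),(b1,z),(y,z)) ((a1,y'),(b1,z'),(y',z'))
def E123M (M : Matrix PENI PENI ℂ) : ℂ :=
  ∑ x, ∑ y, ∑ z, ∑ x', ∑ y', ∑ z',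
    M ((x,y),(x,z),(y,z)) ((x',y'),(x',z'),(y',z'))

def LM (M : Matrix PENI PENI ℂ) : ℂ :=
  (1/2) * E1M M + (1/2) * E2M M + (1/2) * E3M M
    - (1/4) * E12M M - (1/4) * E13M M - (1/4) * E23M M - (3/8) * E123M M

/-! ### sesquilinear helpers -/

lemma sesq1 (F : Fin 2 → ℂ) :
    (∑ i, ∑ j, F i * (starRingEnd ℂ) (F j)) = (Complex.normSq (∑ i, F i) : ℂ) := by
  calc (∑ i, ∑ j, F i * (starRingEnd ℂ) (F j))
      = (∑ i, F i) * (∑ j, (starRingEnd ℂ) (F j)) := (Finset.sum_mul_sum _ _ _ _).symm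
    _ = (∑ i, F i) * (starRingEnd ℂ) (∑ j, F j) := by rw [map_sum]
    _ = (Complex.normSq (∑ i, F i) : ℂ) := Complex.mul_conj _

lemma sesq2 (F : Fin 2 → Fin 2 → ℂ) :
    (∑ i, ∑ k, ∑ j, ∑ l, F i k * (starRingEnd ℂ) (F j l))
      = (Complex.normSq (∑ i, ∑ k, F i k) : ℂ) := by
  have h1 : ∀ z : ℂ, (∑ j, ∑ l, z * (starRingEnd ℂ) (F j l))
      = z * (starRingEnd ℂ) (∑ j, ∑ l, F j l) := by
    intro z; simp [← Finset.mul_sum, map_sum]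
  calc (∑ i, ∑ k, ∑ j, ∑ l, F i k * (starRingEnd ℂ) (F j l))
      = ∑ i, ∑ k, F i k * (starRingEnd ℂ) (∑ j, ∑ l, F j l) := by simp only [h1]
    _ = (∑ i, ∑ k, F i k) * (starRingEnd ℂ) (∑ j, ∑ l, F j l) := by
        simp only [← Finset.sum_mul]
    _ = _ := Complex.mul_conj _

lemma sesq3 (F : Fin 2 → Fin 2 → Fin 2 → ℂ) :
    (∑ i, ∑ k, ∑ m, ∑ j, ∑ l, ∑ n, F i k m * (starRingEnd ℂ) (F j l n))
      = (Complex.normSq (∑ i, ∑ k, ∑ m, F i k m) : ℂ) := by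
  have h1 : ∀ z : ℂ, (∑ j, ∑ l, ∑ n, z * (starRingEnd ℂ) (F j l n))
      = z * (starRingEnd ℂ) (∑ j, ∑ l, ∑ n, F j l n) := by
    intro z; simp [← Finset.mul_sum, map_sum]
  calc (∑ i, ∑ k, ∑ m, ∑ j, ∑ l, ∑ n, F i k m * (starRingEnd ℂ) (F j l n))
      = ∑ i, ∑ k, ∑ m, F i k m * (starRingEnd ℂ) (∑ j, ∑ l, ∑ n, F j l n) := by
        simp only [h1]
    _ = (∑ i, ∑ k, ∑ m, F i k m) * (starRingEnd ℂ) (∑ j, ∑ l, ∑ n, F j l n) := by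
        simp only [← Finset.sum_mul]
    _ = _ := Complex.mul_conj _

/-! ### linearity and vecProj evaluation of the matrix functionals -/

section Elin
variable {k : ℕ} (N : Fin k → Matrix PENI PENI ℂ) (c : ℂ) (M : Matrix PENI PENI ℂ)
  (φ : PENI → ℂ)

lemma E1M_sum : E1M (∑ t, N t) = ∑ t, E1M (N t) := by
  simp only [E1M, Matrix.sum_apply, Fin.sum_univ_two, ← Finset.sum_add_distrib]
lemma E2M_sum : E2M (∑ t, N t) = ∑ t, E2M (N t) := by
  simp only [E2M, Matrix.sum_apply, Fin.sum_univ_two, ← Finset.sum_add_distrib]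
lemma E3M_sum : E3M (∑ t, N t) = ∑ t, E3M (N t) := by
  simp only [E3M, Matrix.sum_apply, Fin.sum_univ_two, ← Finset.sum_add_distrib]
lemma E12M_sum : E12M (∑ t, N t) = ∑ t, E12M (N t) := by
  simp only [E12M, Matrix.sum_apply, Fin.sum_univ_two, ← Finset.sum_add_distrib]
lemma E13M_sum : E13M (∑ t, N t) = ∑ t, E13M (N t) := by
  simp only [E13M, Matrix.sum_apply, Fin.sum_univ_two, ← Finset.sum_add_distrib]
lemma E23M_sum : E23M (∑ t, N t) = ∑ t, E23M (N t) := by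
  simp only [E23M, Matrix.sum_apply, Fin.sum_univ_two, ← Finset.sum_add_distrib]
lemma E123M_sum : E123M (∑ t, N t) = ∑ t, E123M (N t) := by
  simp only [E123M, Matrix.sum_apply, Fin.sum_univ_two, ← Finset.sum_add_distrib]

lemma E1M_smul : E1M (c • M) = c * E1M M := by
  simp only [E1M, Matrix.smul_apply, smul_eq_mul, ← Finset.mul_sum]
lemma E2M_smul : E2M (c • M) = c * E2M M := by
  simp only [E2M, Matrix.smul_apply, smul_eq_mul, ← Finset.mul_sum]
lemma E3M_smul : E3M (c • M) = c * E3M M := by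
  simp only [E3M, Matrix.smul_apply, smul_eq_mul, ← Finset.mul_sum]
lemma E12M_smul : E12M (c • M) = c * E12M M := by
  simp only [E12M, Matrix.smul_apply, smul_eq_mul, ← Finset.mul_sum]
lemma E13M_smul : E13M (c • M) = c * E13M M := by
  simp only [E13M, Matrix.smul_apply, smul_eq_mul, ← Finset.mul_sum]
lemma E23M_smul : E23M (c • M) = c * E23M M := by
  simp only [E23M, Matrix.smul_apply, smul_eq_mul, ← Finset.mul_sum]
lemma E123M_smul : E123M (c • M) = c * E123M M := by
  simp only [E123M, Matrix.smul_apply, smul_eq_mul, ← Finset.mul_sum]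

lemma E1M_proj : E1M (vecProj φ) = ((A1 φ : ℝ) : ℂ) := by
  simp only [E1M, vecProj, sesq1, A1]
  all_goals push_cast
  all_goals rfl
lemma E2M_proj : E2M (vecProj φ) = ((A2 φ : ℝ) : ℂ) := by
  simp only [E2M, vecProj, sesq1, A2]
  all_goals push_cast
  all_goals rfl
lemma E3M_proj : E3M (vecProj φ) = ((A3 φ : ℝ) : ℂ) := by
  simp only [E3M, vecProj, sesq1, A3]
  all_goals push_cast
  all_goals rfl
lemma E12M_proj : E12M (vecProj φ) = ((A12 φ : ℝ) : ℂ) := by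
  simp only [E12M, vecProj, sesq2, A12]
  all_goals push_cast
  all_goals rfl
lemma E13M_proj : E13M (vecProj φ) = ((A13 φ : ℝ) : ℂ) := by
  simp only [E13M, vecProj, sesq2, A13]
  all_goals push_cast
  all_goals rfl
lemma E23M_proj : E23M (vecProj φ) = ((A23 φ : ℝ) : ℂ) := by
  simp only [E23M, vecProj, sesq2, A23]
  all_goals push_cast
  all_goals rfl
lemma E123M_proj : E123M (vecProj φ) = ((A123 φ : ℝ) : ℂ) := by
  simp only [E123M, vecProj, sesq3, A123]
  all_goals push_cast
  all_goals rfl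

end Elin

lemma LB {k : ℕ} (w : Fin k → ℝ) (ψ : Fin k → PENI → ℂ) :
    LM (∑ t, (w t : ℂ) • vecProj (ψ t)) = ∑ t, (w t : ℂ) * ((Qf (ψ t) : ℝ) : ℂ) := by
  rw [LM, E1M_sum, E2M_sum, E3M_sum, E12M_sum, E13M_sum, E23M_sum, E123M_sum]
  simp only [E1M_smul, E2M_smul, E3M_smul, E12M_smul, E13M_smul, E23M_smul, E123M_smul,
    E1M_proj, E2M_proj, E3M_proj, E12M_proj, E13M_proj, E23M_proj, E123M_proj]
  simp only [Finset.mul_sum, ← Finset.sum_add_distrib, ← Finset.sum_sub_distrib]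
  refine Finset.sum_congr rfl fun t _ => ?_
  rw [Qf]
  push_cast
  ring

/-! ### evaluation on sigmaCC -/

section Esigma
variable (p : ℝ)

set_option maxHeartbeats 1000000 in
lemma E1M_sigma : E1M (sigmaCC 2 p) = (((3*p+1)/2 : ℝ) : ℂ) := by
  simp only [E1M, sigmaCC, iso, phiPlus, Matrix.add_apply, Matrix.smul_apply,
    Matrix.one_apply, smul_eq_mul, Fin.sum_univ_two]
  norm_num [Prod.ext_iff]
  push_cast
  ring
set_option maxHeartbeats 1000000 in
lemma E2M_sigma : E2M (sigmaCC 2 p) = (((3*p+1)/2 : ℝ) : ℂ) := by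
  simp only [E2M, sigmaCC, iso, phiPlus, Matrix.add_apply, Matrix.smul_apply,
    Matrix.one_apply, smul_eq_mul, Fin.sum_univ_two]
  norm_num [Prod.ext_iff]
  push_cast
  ring
set_option maxHeartbeats 1000000 in
lemma E3M_sigma : E3M (sigmaCC 2 p) = (((3*p+1)/2 : ℝ) : ℂ) := by
  simp only [E3M, sigmaCC, iso, phiPlus, Matrix.add_apply, Matrix.smul_apply,
    Matrix.one_apply, smul_eq_mul, Fin.sum_univ_two]
  norm_num [Prod.ext_iff]
  push_cast
  ring
set_option maxHeartbeats 1000000 in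
lemma E12M_sigma : E12M (sigmaCC 2 p) = ((((3*p+1)/2)^2 : ℝ) : ℂ) := by
  simp only [E12M, sigmaCC, iso, phiPlus, Matrix.add_apply, Matrix.smul_apply,
    Matrix.one_apply, smul_eq_mul, Fin.sum_univ_two]
  norm_num [Prod.ext_iff]
  push_cast
  ring
set_option maxHeartbeats 1000000 in
lemma E13M_sigma : E13M (sigmaCC 2 p) = ((((3*p+1)/2)^2 : ℝ) : ℂ) := by
  simp only [E13M, sigmaCC, iso, phiPlus, Matrix.add_apply, Matrix.smul_apply,
    Matrix.one_apply, smul_eq_mul, Fin.sum_univ_two]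
  norm_num [Prod.ext_iff]
  push_cast
  ring
set_option maxHeartbeats 1000000 in
lemma E23M_sigma : E23M (sigmaCC 2 p) = ((((3*p+1)/2)^2 : ℝ) : ℂ) := by
  simp only [E23M, sigmaCC, iso, phiPlus, Matrix.add_apply, Matrix.smul_apply,
    Matrix.one_apply, smul_eq_mul, Fin.sum_univ_two]
  norm_num [Prod.ext_iff]
  push_cast
  ring
set_option maxHeartbeats 1000000 in
lemma E123M_sigma : E123M (sigmaCC 2 p) = ((((3*p+1)/2)^3 : ℝ) : ℂ) := by
  simp only [E123M, sigmaCC, iso, phiPlus, Matrix.add_apply, Matrix.smul_apply,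
    Matrix.one_apply, smul_eq_mul, Fin.sum_univ_two]
  norm_num [Prod.ext_iff]
  push_cast
  ring

lemma LA : LM (sigmaCC 2 p)
    = ((3*((3*p+1)/4) - 3*((3*p+1)/4)^2 - 3*((3*p+1)/4)^3 : ℝ) : ℂ) := by
  rw [LM, E1M_sigma, E2M_sigma, E3M_sigma, E12M_sigma, E13M_sigma, E23M_sigma, E123M_sigma]
  push_cast
  ring

end Esigma

end PENaux

theorem sigmaCC_GME (p : ℝ) (hp1 : p ≤ 1) (hp : (2 * Real.sqrt 5 - 3) / 3 < p) :
    ¬ Bisep3 (sigmaCC 2 p) := by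
  rintro ⟨k, w, ψ, hw, hsum, hfact, hnorm, hρ⟩
  have hQ : ∀ t, 0 ≤ PENaux.Qf (ψ t) := by
    intro t
    rcases hfact t with ⟨f, g, hfg⟩ | ⟨f, g, hfg⟩ | ⟨f, g, hfg⟩
    · exact PENaux.cutA (ψ t) f g hfg
    · exact PENaux.cutB (ψ t) f g hfg
    · exact PENaux.cutC (ψ t) f g hfg
  have h1 := PENaux.LA p
  have h2 : PENaux.LM (sigmaCC 2 p) = ∑ t, (w t : ℂ) * ((PENaux.Qf (ψ t) : ℝ) : ℂ) := by
    rw [hρ]; exact PENaux.LB w ψ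
  have h3 : (3*((3*p+1)/4) - 3*((3*p+1)/4)^2 - 3*((3*p+1)/4)^3 : ℝ)
      = ∑ t, w t * PENaux.Qf (ψ t) := by
    have hc := h1.symm.trans h2
    have : ((3*((3*p+1)/4) - 3*((3*p+1)/4)^2 - 3*((3*p+1)/4)^3 : ℝ) : ℂ)
        = ((∑ t, w t * PENaux.Qf (ψ t) : ℝ) : ℂ) := by
      rw [hc]; push_cast; rfl
    exact_mod_cast this
  have h4 : 0 ≤ ∑ t, w t * PENaux.Qf (ψ t) :=
    Finset.sum_nonneg fun t _ => mul_nonneg (hw t) (hQ t)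
  have hs : Real.sqrt 5 ^ 2 = 5 := Real.sq_sqrt (by norm_num)
  have hs0 : (0:ℝ) ≤ Real.sqrt 5 := Real.sqrt_nonneg 5
  have hs2 : (2:ℝ) ≤ Real.sqrt 5 := by nlinarith
  set F := (3*p+1)/4 with hF
  have hFgt : (Real.sqrt 5 - 1)/2 < F := by rw [hF]; nlinarith
  have hF0 : 0 < F := by nlinarith
  have hcube : F^2 + F - 1 > 0 := by nlinarith
  have h5 : (3*F - 3*F^2 - 3*F^3 : ℝ) < 0 := by nlinarith
  rw [h3] at h5
  linarith
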